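/- Let X be a Banach space with a boundedly complete basis (e_i) with biorthogonal functionals (e_i*), and let M = cl(span(e_i*)) ⊆ X*. Then M contains no proper closed total subspace, i.e., if N ⊆ M is closed and total over X (N separates the points of X), then N = M. -/

import Mathlib

open NormedSpace Filter Finset

/-- If `(e i)` is a boundedly complete basis of a Banach space `X` with
biorthogonal functionals `(estar i)` and `M` is the closed linear span of the
`estar i` in `X*`, then `M` contains no proper closed total subspace: every closed
subspace `N ⊆ M` that separates the points of `X` equals `M`. -/
theorem no_proper_closed_total_subspace_of_boundedly_complete
    {X : Type*} [NormedAddCommGroup X] [NormedSpace ℝ X] [CompleteSpace X]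
    (e : ℕ → X) (estar : ℕ → StrongDual ℝ X)
    (hbiorth : ∀ i j, estar i (e j) = if i = j then (1 : ℝ) else 0)
    (hbasis : ∀ y : X,
      Tendsto (fun n => ∑ i ∈ range n, estar i y • e i) atTop (nhds y))
    (hbc : ∀ a : ℕ → ℝ, (∃ C : ℝ, ∀ n, ‖∑ i ∈ range n, a i • e i‖ ≤ C) →
      ∃ y : X, Tendsto (fun n => ∑ i ∈ range n, a i • e i) atTop (nhds y))
    (N : Submodule ℝ (StrongDual ℝ X))
    (hNM : N ≤ (Submodule.span ℝ (Set.range estar)).topologicalClosure)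
    (hNc : IsClosed (N : Set (StrongDual ℝ X)))
    (htotal : ∀ x : X, x ≠ 0 → ∃ f ∈ N, f x ≠ 0) :
    N = (Submodule.span ℝ (Set.range estar)).topologicalClosure := by
  classical
  -- the partial-sum projections
  set S : ℕ → X →L[ℝ] X := fun n => ∑ i ∈ range n, (estar i).smulRight (e i) with hS
  have hSapp : ∀ n y, S n y = ∑ i ∈ range n, estar i y • e i := by
    intro n y
    simp [hS, ContinuousLinearMap.sum_apply]
  -- uniform boundedness of the projections
  obtain ⟨K, hK⟩ : ∃ K, ∀ n, ‖S n‖ ≤ K := by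
    apply banach_steinhaus
    intro y
    have h1 : Tendsto (fun n => ‖S n y‖) atTop (nhds ‖y‖) := by
      have := (hbasis y).norm
      apply this.congr
      intro n; rw [hSapp]
    obtain ⟨C, hC⟩ := h1.bddAbove_range
    exact ⟨C, fun n => hC ⟨n, rfl⟩⟩
  refine le_antisymm hNM ?_
  intro g hg
  by_contra hgN
  -- separate g from N
  obtain ⟨f, u, hfu, hufg⟩ :=
    geometric_hahn_banach_closed_point (N.convex) hNc hgN
  -- f vanishes on N
  have hf0 : ∀ a ∈ N, f a = 0 := by
    intro a ha
    by_contra hfa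
    have ht : ∀ t : ℝ, t * f a < u := by
      intro t
      have := hfu (t • a) (N.smul_mem t ha)
      simpa using this
    have := ht ((u + 1) / f a)
    rw [div_mul_cancel₀ _ hfa] at this
    linarith
  have hu0 : 0 < u := by simpa using hfu 0 N.zero_mem
  -- the coefficients
  set a : ℕ → ℝ := fun i => f (estar i) with ha
  -- partial sums of ∑ a i • e i are bounded
  have hbdd : ∀ n, ‖∑ i ∈ range n, a i • e i‖ ≤ ‖f‖ * K := by
    intro n
    set x : X := ∑ i ∈ range n, a i • e i with hx
    obtain ⟨h, hh1, hhx'⟩ := exists_dual_vector'' ℝ x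
    have hhx : h x = ‖x‖ := by exact_mod_cast hhx'
    set T : StrongDual ℝ X := ∑ i ∈ range n, h (e i) • estar i with hT
    have hTcomp : T = h.comp (S n) := by
      ext y
      simp [hT, ContinuousLinearMap.sum_apply, hSapp, map_sum, mul_comm]
    have hTnorm : ‖T‖ ≤ K := by
      rw [hTcomp]
      calc ‖h.comp (S n)‖ ≤ ‖h‖ * ‖S n‖ := h.opNorm_comp_le _
        _ ≤ 1 * K := by
            apply mul_le_mul hh1 (hK n) (norm_nonneg _) zero_le_one
        _ = K := one_mul K
    have hfT : f T = ‖x‖ := by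
      have e1 : f T = ∑ i ∈ range n, h (e i) * a i := by
        simp [hT, map_sum, ha]
      have e2 : h x = ∑ i ∈ range n, a i * h (e i) := by
        simp [hx, map_sum]
      rw [← hhx, e1, e2]
      exact Finset.sum_congr rfl fun i _ => mul_comm _ _
    calc ‖x‖ = f T := hfT.symm
      _ ≤ ‖f T‖ := le_abs_self _
      _ ≤ ‖f‖ * ‖T‖ := f.le_opNorm T
      _ ≤ ‖f‖ * K := by
          apply mul_le_mul_of_nonneg_left hTnorm (norm_nonneg f)
  obtain ⟨y, hy⟩ := hbc a ⟨‖f‖ * K, hbdd⟩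
  -- the coordinates of y are the a i
  have hya : ∀ j, estar j y = f (estar j) := by
    intro j
    have h1 : Tendsto (fun n => estar j (∑ i ∈ range n, a i • e i)) atTop
        (nhds (estar j y)) := ((estar j).continuous.tendsto y).comp hy
    have h2 : ∀ n, j < n → estar j (∑ i ∈ range n, a i • e i) = a j := by
      intro n hn
      rw [map_sum]
      have : ∀ i ∈ range n, estar j (a i • e i) = if j = i then a i else 0 := by
        intro i _
        rw [map_smul, hbiorth j i]
        simp [smul_eq_mul]
      rw [Finset.sum_congr rfl this, Finset.sum_ite_eq]
      simp [Finset.mem_range.mpr hn]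
    have h3 : Tendsto (fun n => estar j (∑ i ∈ range n, a i • e i)) atTop
        (nhds (a j)) := by
      apply Tendsto.congr' _ tendsto_const_nhds
      filter_upwards [eventually_gt_atTop j] with n hn
      exact (h2 n hn).symm
    exact tendsto_nhds_unique h1 h3
  -- f agrees with evaluation at y on the closed span
  set φ : StrongDual ℝ (StrongDual ℝ X) := f - (inclusionInDoubleDual ℝ X) y with hφ
  have hker : (Submodule.span ℝ (Set.range estar)).topologicalClosure ≤
      LinearMap.ker ((φ : StrongDual ℝ X →L[ℝ] ℝ) : StrongDual ℝ X →ₗ[ℝ] ℝ) := by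
    apply Submodule.topologicalClosure_minimal
    · rw [Submodule.span_le]
      rintro _ ⟨j, rfl⟩
      simp only [SetLike.mem_coe, LinearMap.mem_ker, ContinuousLinearMap.coe_coe,
        hφ, ContinuousLinearMap.sub_apply, dual_def, hya j, sub_self]
    · exact ContinuousLinearMap.isClosed_ker _
  have key : ∀ g' ∈ (Submodule.span ℝ (Set.range estar)).topologicalClosure,
      f g' = g' y := by
    intro g' hg'
    have := hker hg'
    rw [LinearMap.mem_ker] at this
    have : φ g' = 0 := this
    rw [hφ] at this
    simp only [ContinuousLinearMap.sub_apply, dual_def, sub_eq_zero] at this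
    exact this
  -- y is nonzero
  have hgy : g y ≠ 0 := by
    rw [← key g hg]
    linarith
  have hy0 : y ≠ 0 := by
    intro h
    apply hgy
    rw [h, map_zero]
  obtain ⟨f', hf'N, hf'y⟩ := htotal y hy0
  apply hf'y
  rw [← key f' (hNM hf'N)]
  exact hf0 f' hf'N
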